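/- arXiv:2212.04791 — 3 statements merged into one kernel-verified Lean document; each statement's English description precedes it below -/
import Mathlib

section
/- Let (a_n)_{n≥1} be a sequence of nonnegative real numbers such that the series ∑_{n=1}^∞ a_n/n converges, and suppose in addition that there is a constant C > 0 such that |a_n − a_{n+1}| ≤ C/n for all n ≥ 1. Then lim_{n→∞} a_n = 0. -/
/-- If `(a n)` is a sequence of nonnegative reals with `∑ a n / n`
convergent and `|a n - a (n+1)| ≤ C / n`, then `a n → 0`. -/
theorem tendsto_zero_of_summable_div_of_diff_le (a : ℕ → ℝ) (ha : ∀ n, 1 ≤ n → 0 ≤ a n)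
    (hsum : Summable fun n : ℕ => a (n + 1) / ((n : ℝ) + 1))
    (C : ℝ) (hC : 0 < C)
    (hdiff : ∀ n : ℕ, 1 ≤ n → |a n - a (n + 1)| ≤ C / (n : ℝ)) :
    Filter.Tendsto a Filter.atTop (nhds 0) := by
  rw [Metric.tendsto_atTop]
  intro ε hε
  set δ : ℝ := ε ^ 2 / (2 * (2 * C + ε)) with hδdef
  have hδ : 0 < δ := by positivity
  obtain ⟨s, hs⟩ := (summable_iff_vanishing.mp hsum) (Metric.ball 0 δ)
    (Metric.ball_mem_nhds 0 hδ)
  refine ⟨s.sup id + 2, fun n hn => ?_⟩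
  have hn1 : 1 ≤ n := by omega
  have hnpos : (0 : ℝ) < n := by exact_mod_cast Nat.lt_of_lt_of_le Nat.zero_lt_one hn1
  rw [Real.dist_eq, sub_zero, abs_of_nonneg (ha n hn1)]
  by_contra hcon
  push_neg at hcon
  -- step lemma: a (n + j) ≥ a n - C * j / n
  have step : ∀ j : ℕ, a n - C * j / n ≤ a (n + j) := by
    intro j
    induction j with
    | zero => simp
    | succ j ih =>
      have h1 : |a (n + j) - a (n + j + 1)| ≤ C / ((n : ℝ) + j) := by
        have := hdiff (n + j) (by omega)
        push_cast at this ⊢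
        convert this using 3 <;> push_cast <;> ring
      have h2 : a (n + j) - C / ((n : ℝ) + j) ≤ a (n + j + 1) := by
        have := (abs_le.mp h1).2
        linarith
      have h3 : C / ((n : ℝ) + j) ≤ C / n := by
        apply div_le_div_of_nonneg_left hC.le hnpos
        have : (0 : ℝ) ≤ j := Nat.cast_nonneg j
        linarith
      have : a n - C * (j + 1) / n ≤ a (n + j) - C / ((n : ℝ) + j) := by
        have hd : C * ((j : ℝ) + 1) / n = C * j / n + C / n := by ring
        rw [hd]
        linarith
      have hcast : ((j : ℝ) + 1) = ((j + 1 : ℕ) : ℝ) := by push_cast; ring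
      calc a n - C * ((j + 1 : ℕ) : ℝ) / n = a n - C * ((j : ℝ) + 1) / n := by
            rw [hcast]
        _ ≤ a (n + j) - C / ((n : ℝ) + j) := this
        _ ≤ a (n + j + 1) := h2
  set L : ℕ := Nat.floor (ε * n / (2 * C)) with hLdef
  have hLle : (L : ℝ) ≤ ε * n / (2 * C) := Nat.floor_le (by positivity)
  have hLge : ε * n / (2 * C) < (L : ℝ) + 1 := Nat.lt_floor_add_one _
  -- a m ≥ ε/2 on the window [n, n+L]
  have hwin : ∀ j : ℕ, j ≤ L → ε / 2 ≤ a (n + j) := by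
    intro j hj
    have h1 : C * (j : ℝ) / n ≤ ε / 2 := by
      have hj' : (j : ℝ) ≤ ε * n / (2 * C) :=
        le_trans (by exact_mod_cast hj) hLle
      rw [div_le_iff₀ hnpos]
      calc C * (j : ℝ) ≤ C * (ε * n / (2 * C)) := by
            apply mul_le_mul_of_nonneg_left hj' hC.le
        _ = ε / 2 * n := by field_simp
    have := step j
    linarith [hcon]
  -- the tail block
  set t : Finset ℕ := Finset.Ico (n - 1) (n + L) with htdef
  have hdisj : Disjoint t s := by
    rw [Finset.disjoint_left]
    intro k hk hks
    have h1 : n - 1 ≤ k := (Finset.mem_Ico.mp hk).1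
    have h2 : k ≤ s.sup id := Finset.le_sup (f := id) hks
    omega
  have hball := hs t hdisj
  rw [Metric.mem_ball, Real.dist_eq, sub_zero] at hball
  have hsumlt : ∑ k ∈ t, a (k + 1) / ((k : ℝ) + 1) < δ :=
    lt_of_le_of_lt (le_abs_self _) hball
  -- lower bound each term by (ε/2)/(n+L)
  have hcard : t.card = L + 1 := by
    rw [htdef, Nat.card_Ico]
    omega
  have hterm : ∀ k ∈ t, (ε / 2) / ((n : ℝ) + L) ≤ a (k + 1) / ((k : ℝ) + 1) := by
    intro k hk
    obtain ⟨hk1, hk2⟩ := Finset.mem_Ico.mp hk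
    have hm : ∃ j : ℕ, j ≤ L ∧ k + 1 = n + j := ⟨k + 1 - n, by omega, by omega⟩
    obtain ⟨j, hjL, hkj⟩ := hm
    have hak : ε / 2 ≤ a (k + 1) := hkj ▸ hwin j hjL
    apply div_le_div₀ (le_trans (by linarith) hak) hak
    · positivity
    · have : (k : ℝ) + 1 ≤ (n : ℝ) + L := by
        have : k + 1 ≤ n + L := by omega
        exact_mod_cast this
      linarith
  have hlow : (L + 1 : ℝ) * ((ε / 2) / ((n : ℝ) + L)) ≤
      ∑ k ∈ t, a (k + 1) / ((k : ℝ) + 1) := by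
    have := Finset.card_nsmul_le_sum t _ _ hterm
    rwa [hcard, nsmul_eq_mul, Nat.cast_add, Nat.cast_one] at this
  -- δ ≤ lower bound
  have hkey : δ ≤ (L + 1 : ℝ) * ((ε / 2) / ((n : ℝ) + L)) := by
    have hre : (L + 1 : ℝ) * ((ε / 2) / ((n : ℝ) + L)) =
        ((L + 1 : ℝ) * (ε / 2)) / ((n : ℝ) + L) := by ring
    rw [hδdef, hre, div_le_div_iff₀ (by positivity) (by positivity)]
    have h1 : ε * n < ((L : ℝ) + 1) * (2 * C) := (div_lt_iff₀ (by positivity)).mp hLge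
    nlinarith [mul_le_mul_of_nonneg_left h1.le hε.le, sq_nonneg ε]
  linarith
end

section
/- Let R₀, R > 0 and let p ∈ ℝ^d satisfy ‖p‖ ≤ R₀ and ‖∇H(p)‖ ≤ R. Then for every q ∈ ℝ^d with ‖q‖ ≤ R, one has the lower bound (1/(2C̄))·‖q − ∇H(p)‖² ≤ H(p) + L(q) − ⟨p,q⟩. -/
open scoped RealInnerProductSpace

variable {d : ℕ}

lemma taylor_upper (H : EuclideanSpace ℝ (Fin d) → ℝ) (hH : ContDiff ℝ 2 H)
    (K : ℝ) (p w : EuclideanSpace ℝ (Fin d))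
    (hK : ∀ x, iteratedFDeriv ℝ 2 H x ![w, w] ≤ K) :
    H (p + w) ≤ H p + fderiv ℝ H p w + K / 2 := by
  have hdiff : Differentiable ℝ H := hH.differentiable (by norm_num)
  have hf1 : ContDiff ℝ 1 (fderiv ℝ H) := hH.fderiv_right (by norm_num)
  set g₁ : ℝ → ℝ := fun t => fderiv ℝ H (p + t • w) w with hg₁def
  have line : ∀ t : ℝ, HasDerivAt (fun t : ℝ => p + t • w) w t := by
    intro t
    simpa using ((hasDerivAt_id t).smul_const w).const_add p
  have hg : ∀ t : ℝ, HasDerivAt (fun t : ℝ => H (p + t • w)) (g₁ t) t := by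
    intro t
    exact (hdiff (p + t • w)).hasFDerivAt.comp_hasDerivAt t (line t)
  have hg2 : ∀ t : ℝ, HasDerivAt g₁ (fderiv ℝ (fderiv ℝ H) (p + t • w) w w) t := by
    intro t
    have hc : HasDerivAt (fun t : ℝ => fderiv ℝ H (p + t • w))
        (fderiv ℝ (fderiv ℝ H) (p + t • w) w) t :=
      ((hf1.differentiable (by norm_num)) (p + t • w)).hasFDerivAt.comp_hasDerivAt t (line t)
    simpa using hc.clm_apply (hasDerivAt_const t w)
  have hKx : ∀ t : ℝ, fderiv ℝ (fderiv ℝ H) (p + t • w) w w ≤ K := by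
    intro t
    have := hK (p + t • w)
    rwa [iteratedFDeriv_two_apply] at this
  -- step 1 : g₁ t ≤ g₁ 0 + K * t on [0,1]
  have step1 : ∀ t ∈ Set.Icc (0:ℝ) 1, g₁ t ≤ g₁ 0 + K * t := by
    set ψ : ℝ → ℝ := fun t => g₁ t - K * t with hψdef
    have hψ : ∀ t : ℝ, HasDerivAt ψ (fderiv ℝ (fderiv ℝ H) (p + t • w) w w - K) t := by
      intro t
      exact ((hg2 t).sub ((hasDerivAt_id t).const_mul K)).congr_deriv (by simp)
    have hanti : AntitoneOn ψ (Set.Icc (0:ℝ) 1) := by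
      apply antitoneOn_of_deriv_nonpos (convex_Icc 0 1)
      · exact fun t _ => ((hψ t).continuousAt).continuousWithinAt
      · exact fun t _ => ((hψ t).differentiableAt).differentiableWithinAt
      · intro t _
        rw [(hψ t).deriv]
        simpa using sub_nonpos.mpr (hKx t)
    intro t ht
    have := hanti (Set.left_mem_Icc.mpr zero_le_one) ht ht.1
    simp only [hψdef, mul_zero, sub_zero] at this
    linarith
  -- step 2
  set φ : ℝ → ℝ := fun t => H (p + t • w) - g₁ 0 * t - K * t ^ 2 / 2 with hφdef
  have hφ : ∀ t : ℝ, HasDerivAt φ (g₁ t - g₁ 0 - K * t) t := by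
    intro t
    have h1 : HasDerivAt (fun t : ℝ => g₁ 0 * t) (g₁ 0) t := by
      simpa using (hasDerivAt_id t).const_mul (g₁ 0)
    have h2 : HasDerivAt (fun t : ℝ => K * t ^ 2 / 2) (K * t) t := by
      have := ((hasDerivAt_pow 2 t).const_mul K).div_const 2
      exact this.congr_deriv (by rw [show (2:ℕ) - 1 = 1 from rfl]; push_cast; ring)
    exact ((hg t).sub h1).sub h2
  have hanti : AntitoneOn φ (Set.Icc (0:ℝ) 1) := by
    apply antitoneOn_of_deriv_nonpos (convex_Icc 0 1)
    · exact fun t _ => ((hφ t).continuousAt).continuousWithinAt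
    · exact fun t _ => ((hφ t).differentiableAt).differentiableWithinAt
    · intro t ht
      rw [interior_Icc] at ht
      rw [(hφ t).deriv]
      have := step1 t ⟨le_of_lt ht.1, le_of_lt ht.2⟩
      linarith
  have := hanti (Set.left_mem_Icc.mpr zero_le_one) (Set.right_mem_Icc.mpr zero_le_one)
    zero_le_one
  have h0 : g₁ 0 = fderiv ℝ H p w := by simp [hg₁def]
  simp only [hφdef, mul_zero, sub_zero, mul_one, one_pow, zero_smul, add_zero, one_smul, h0] at this
  nlinarith [this]

lemma taylor_lower (H : EuclideanSpace ℝ (Fin d) → ℝ) (hH : ContDiff ℝ 2 H)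
    (K : ℝ) (p w : EuclideanSpace ℝ (Fin d))
    (hK : ∀ x, K ≤ iteratedFDeriv ℝ 2 H x ![w, w]) :
    H p + fderiv ℝ H p w + K / 2 ≤ H (p + w) := by
  have h := taylor_upper (fun x => -H x) hH.neg (-K) p w (by
    intro x
    have h2 := hK x
    simp only [show (fun x => -H x) = -H from rfl, iteratedFDeriv_neg_apply,
      ContinuousMultilinearMap.neg_apply]
    linarith)
  have hfd : fderiv ℝ (fun x => -H x) p w = -(fderiv ℝ H p w) := by
    rw [fderiv_fun_neg]; rfl
  rw [hfd] at h
  linarith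

lemma inner_gradient_eq (H : EuclideanSpace ℝ (Fin d) → ℝ) (hH : ContDiff ℝ 2 H)
    (x v : EuclideanSpace ℝ (Fin d)) : ⟪gradient H x, v⟫ = fderiv ℝ H x v := by
  rw [gradient, ← InnerProductSpace.toDual_apply_apply, LinearIsometryEquiv.apply_symm_apply]

/-- Lower bound: `(1/(2C̄)) ‖q - ∇H p‖² ≤ H p + L q - ⟨p, q⟩` whenever
`‖p‖ ≤ R₀`, `‖∇H p‖ ≤ R` and `‖q‖ ≤ R`. -/
theorem fenchel_gap_lower_bound (d : ℕ) (hd : 1 ≤ d) (Cb : ℝ) (hCb : 0 < Cb)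
    (H : EuclideanSpace ℝ (Fin d) → ℝ) (hH : ContDiff ℝ 2 H)
    (hHess : ∀ p v : EuclideanSpace ℝ (Fin d),
      (1 / Cb) * ‖v‖ ^ 2 ≤ iteratedFDeriv ℝ 2 H p ![v, v] ∧
        iteratedFDeriv ℝ 2 H p ![v, v] ≤ Cb * ‖v‖ ^ 2)
    (L : EuclideanSpace ℝ (Fin d) → ℝ)
    (hL : ∀ q, L q = ⨆ p : EuclideanSpace ℝ (Fin d), (⟪p, q⟫ - H p))
    (R₀ R : ℝ) (hR₀ : 0 < R₀) (hR : 0 < R)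
    (p : EuclideanSpace ℝ (Fin d)) (hp : ‖p‖ ≤ R₀) (hgp : ‖gradient H p‖ ≤ R) :
    ∀ q : EuclideanSpace ℝ (Fin d), ‖q‖ ≤ R →
      (1 / (2 * Cb)) * ‖q - gradient H p‖ ^ 2 ≤ H p + L q - ⟪p, q⟫ := by
  intro q _
  set G := gradient H p with hG
  -- the supremum is bounded above
  have hbdd : BddAbove (Set.range fun x : EuclideanSpace ℝ (Fin d) => ⟪x, q⟫ - H x) := by
    set g0 := gradient H 0 with hg0
    refine ⟨Cb * ‖q - g0‖ ^ 2 / 2 - H 0, ?_⟩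
    rintro y ⟨x, rfl⟩
    have hlow := taylor_lower H hH ((1 / Cb) * ‖x‖ ^ 2) 0 x (fun z => (hHess z x).1)
    rw [zero_add] at hlow
    have hfdx : fderiv ℝ H 0 x = ⟪g0, x⟫ := (inner_gradient_eq H hH 0 x).symm
    rw [hfdx] at hlow
    have hx1 : ⟪x, q⟫ - ⟪g0, x⟫ ≤ ‖q - g0‖ * ‖x‖ := by
      have : ⟪x, q⟫ - ⟪g0, x⟫ = ⟪x, q - g0⟫ := by
        rw [inner_sub_right, real_inner_comm g0 x]
      rw [this]
      exact (real_inner_le_norm x (q - g0)).trans (by rw [mul_comm])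
    have hsq : ‖q - g0‖ * ‖x‖ - (1 / Cb) * ‖x‖ ^ 2 / 2 ≤ Cb * ‖q - g0‖ ^ 2 / 2 := by
      have heq : Cb * ‖q - g0‖ ^ 2 / 2 - (‖q - g0‖ * ‖x‖ - 1 / Cb * ‖x‖ ^ 2 / 2) =
          (Cb * ‖q - g0‖ - ‖x‖) ^ 2 / (2 * Cb) := by
        field_simp
        ring
      have hnn : (0:ℝ) ≤ (Cb * ‖q - g0‖ - ‖x‖) ^ 2 / (2 * Cb) :=
        div_nonneg (sq_nonneg _) (by linarith)
      linarith
    linarith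
  -- choose the test point
  set w : EuclideanSpace ℝ (Fin d) := Cb⁻¹ • (q - G) with hw
  have hLq : ⟪p + w, q⟫ - H (p + w) ≤ L q := by
    rw [hL q]
    exact le_ciSup hbdd (p + w)
  have hup := taylor_upper H hH (Cb * ‖w‖ ^ 2) p w (fun z => (hHess z w).2)
  have hfdw : fderiv ℝ H p w = ⟪G, w⟫ := (inner_gradient_eq H hH p w).symm
  rw [hfdw] at hup
  have hinner1 : ⟪p + w, q⟫ = ⟪p, q⟫ + ⟪w, q⟫ := inner_add_left _ _ _
  have hkey : ⟪w, q⟫ - ⟪G, w⟫ = Cb⁻¹ * ‖q - G‖ ^ 2 := by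
    have : ⟪w, q⟫ - ⟪G, w⟫ = ⟪w, q - G⟫ := by
      rw [inner_sub_right, real_inner_comm G w]
    rw [this, hw, real_inner_smul_left, real_inner_self_eq_norm_sq]
  have hnw : ‖w‖ ^ 2 = Cb⁻¹ ^ 2 * ‖q - G‖ ^ 2 := by
    rw [hw, norm_smul, mul_pow]
    simp [hCb.le, abs_of_nonneg (inv_nonneg.mpr hCb.le)]
  have hfin : (1 / (2 * Cb)) * ‖q - G‖ ^ 2 =
      Cb⁻¹ * ‖q - G‖ ^ 2 - Cb * (Cb⁻¹ ^ 2 * ‖q - G‖ ^ 2) / 2 := by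
    field_simp
    ring
  rw [hfin]
  have : H p + (⟪p + w, q⟫ - H (p + w)) - ⟪p, q⟫ ≤ H p + L q - ⟪p, q⟫ := by linarith
  refine le_trans ?_ this
  rw [hinner1]
  have : ⟪w, q⟫ - (H (p + w) - H p) ≥ ⟪w, q⟫ - ⟪G, w⟫ - Cb * ‖w‖ ^ 2 / 2 := by linarith
  rw [hnw] at this
  rw [← hkey]
  linarith
end

section
/- Let R₀, R > 0. There exists a constant C > 0, depending only on C̄, R₀ and R, such that for every p ∈ ℝ^d with ‖p‖ ≤ R₀ and ‖∇H(p)‖ ≤ R, and every q ∈ ℝ^d with ‖q‖ ≤ R, one has the upper bound H(p) + L(q) − ⟨p,q⟩ ≤ C·‖q − ∇H(p)‖. -/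
open scoped RealInnerProductSpace


lemma strong_cvx (d : ℕ) (Cb : ℝ) (hCb : 0 < Cb)
    (H : EuclideanSpace ℝ (Fin d) → ℝ) (hH : ContDiff ℝ 2 H)
    (hHess : ∀ p v : EuclideanSpace ℝ (Fin d),
      (1 / Cb) * ‖v‖ ^ 2 ≤ iteratedFDeriv ℝ 2 H p ![v, v] ∧
        iteratedFDeriv ℝ 2 H p ![v, v] ≤ Cb * ‖v‖ ^ 2)
    (x y : EuclideanSpace ℝ (Fin d)) :
    H x + ⟪gradient H x, y - x⟫ + ‖y - x‖ ^ 2 / (2 * Cb) ≤ H y := by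
  set u := y - x with hu
  have hH1 : Differentiable ℝ H := hH.differentiable two_ne_zero
  have hDH : Differentiable ℝ (fderiv ℝ H) :=
    (hH.fderiv_right (by norm_num : (1 : WithTop ℕ∞) + 1 ≤ 2)).differentiable one_ne_zero
  set γ : ℝ → EuclideanSpace ℝ (Fin d) := fun t => x + t • u with hγdef
  have hγ : ∀ t : ℝ, HasDerivAt γ u t := by
    intro t
    have : HasDerivAt (fun t : ℝ => t • u) ((1 : ℝ) • u) t :=
      (hasDerivAt_id t).smul_const u
    simpa [hγdef] using this.const_add x
  set f' : ℝ → ℝ := fun t => fderiv ℝ H (γ t) u with hf'def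
  have hf' : ∀ t : ℝ, HasDerivAt (fun t => H (γ t)) (f' t) t := fun t =>
    ((hH1 (γ t)).hasFDerivAt).comp_hasDerivAt t (hγ t)
  have hf'' : ∀ t : ℝ, HasDerivAt f' (iteratedFDeriv ℝ 2 H (γ t) ![u, u]) t := by
    intro t
    have h1 : HasFDerivAt (fun y => fderiv ℝ H y u)
        ((ContinuousLinearMap.apply ℝ ℝ u).comp (fderiv ℝ (fderiv ℝ H) (γ t))) (γ t) :=
      ((ContinuousLinearMap.apply ℝ ℝ u).hasFDerivAt).comp (γ t) (hDH (γ t)).hasFDerivAt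
    have h2 := h1.comp_hasDerivAt t (hγ t)
    have h3 : iteratedFDeriv ℝ 2 H (γ t) ![u, u]
        = fderiv ℝ (fderiv ℝ H) (γ t) u u := by
      rw [iteratedFDeriv_two_apply]; simp
    rw [h3]
    exact h2
  set φ : ℝ → ℝ := fun t => H (γ t) - t ^ 2 * (‖u‖ ^ 2 / (2 * Cb)) with hφdef
  set φ' : ℝ → ℝ := fun t => f' t - (2 * t) * (‖u‖ ^ 2 / (2 * Cb)) with hφ'def
  have hφ' : ∀ t : ℝ, HasDerivAt φ (φ' t) t := by
    intro t
    have h4 : HasDerivAt (fun t : ℝ => t ^ 2 * (‖u‖ ^ 2 / (2 * Cb)))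
        ((2 * t) * (‖u‖ ^ 2 / (2 * Cb))) t := by
      have := (hasDerivAt_pow 2 t).mul_const (‖u‖ ^ 2 / (2 * Cb))
      simpa [mul_comm] using this
    exact (hf' t).sub h4
  have hmono : Monotone φ' := by
    apply monotone_of_hasDerivAt_nonneg
      (f' := fun t => iteratedFDeriv ℝ 2 H (γ t) ![u, u] - 2 * (‖u‖ ^ 2 / (2 * Cb)))
    · intro t
      have h5 : HasDerivAt (fun t : ℝ => (2 * t) * (‖u‖ ^ 2 / (2 * Cb)))
          (2 * (‖u‖ ^ 2 / (2 * Cb))) t := by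
        simpa [mul_assoc] using
          ((hasDerivAt_id t).const_mul 2).mul_const (‖u‖ ^ 2 / (2 * Cb))
      exact (hf'' t).sub h5
    · intro t
      have := (hHess (γ t) u).1
      have he : 2 * (‖u‖ ^ 2 / (2 * Cb)) = (1 / Cb) * ‖u‖ ^ 2 := by
        field_simp
      simp only [Pi.zero_apply]
      rw [he]
      linarith
  obtain ⟨c, hc, hslope⟩ := exists_hasDerivAt_eq_slope φ φ' one_pos
    (fun t _ => (hφ' t).continuousAt.continuousWithinAt) (fun t _ => hφ' t)
  have hφ1 : φ 1 = H y - ‖u‖ ^ 2 / (2 * Cb) := by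
    simp [hφdef, hγdef, hu]
  have hφ0 : φ 0 = H x := by simp [hφdef, hγdef]
  have hφ'0 : φ' 0 = ⟪gradient H x, u⟫ := by
    have : ⟪gradient H x, u⟫ = fderiv ℝ H x u := by
      rw [gradient, InnerProductSpace.toDual_symm_apply]
    simp [hφ'def, hf'def, hγdef, this]
  have h6 : φ' 0 ≤ φ' c := hmono hc.1.le
  rw [hslope] at h6
  rw [hφ1, hφ0, hφ'0] at h6
  have : ⟪gradient H x, u⟫ ≤ (H y - ‖u‖ ^ 2 / (2 * Cb) - H x) := by
    simpa using h6
  linarith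


/-- Upper bound: there exists `C > 0` (depending only on `C̄, R₀, R`)
such that `H p + L q - ⟨p, q⟩ ≤ C ‖q - ∇H p‖` whenever `‖p‖ ≤ R₀`, `‖∇H p‖ ≤ R`,
`‖q‖ ≤ R`. -/
theorem fenchel_gap_upper_bound (d : ℕ) (hd : 1 ≤ d) (Cb : ℝ) (hCb : 0 < Cb)
    (H : EuclideanSpace ℝ (Fin d) → ℝ) (hH : ContDiff ℝ 2 H)
    (hHess : ∀ p v : EuclideanSpace ℝ (Fin d),
      (1 / Cb) * ‖v‖ ^ 2 ≤ iteratedFDeriv ℝ 2 H p ![v, v] ∧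
        iteratedFDeriv ℝ 2 H p ![v, v] ≤ Cb * ‖v‖ ^ 2)
    (L : EuclideanSpace ℝ (Fin d) → ℝ)
    (hL : ∀ q, L q = ⨆ p : EuclideanSpace ℝ (Fin d), (⟪p, q⟫ - H p))
    (R₀ R : ℝ) (hR₀ : 0 < R₀) (hR : 0 < R) :
    ∃ C : ℝ, 0 < C ∧
      ∀ p q : EuclideanSpace ℝ (Fin d), ‖p‖ ≤ R₀ → ‖gradient H p‖ ≤ R → ‖q‖ ≤ R →
        H p + L q - ⟪p, q⟫ ≤ C * ‖q - gradient H p‖ := by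
  refine ⟨Cb * R + 1, by positivity, ?_⟩
  intro p q hp hgp hq
  set g := gradient H p with hg
  set w := q - g with hw
  have hLq : L q ≤ ⟪p, q⟫ - H p + Cb / 2 * ‖w‖ ^ 2 := by
    rw [hL q]
    apply ciSup_le
    intro p'
    have hs := strong_cvx d Cb hCb H hH hHess p p'
    have hip : ⟪p' - p, w⟫ = ⟪p', q⟫ - ⟪p, q⟫ - ⟪g, p' - p⟫ := by
      simp only [hw, inner_sub_left, inner_sub_right, real_inner_comm g p',
        real_inner_comm g p]
    have hin : ⟪p' - p, w⟫ ≤ ‖p' - p‖ * ‖w‖ := real_inner_le_norm _ _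
    have hamgm : ‖p' - p‖ * ‖w‖ - ‖p' - p‖ ^ 2 / (2 * Cb) ≤ Cb / 2 * ‖w‖ ^ 2 := by
      have h2c : (0 : ℝ) < 2 * Cb := by positivity
      rw [sub_le_iff_le_add, ← sub_le_iff_le_add', le_div_iff₀ h2c]
      nlinarith [sq_nonneg (‖p' - p‖ - Cb * ‖w‖)]
    linarith
  have hwle : ‖w‖ ≤ 2 * R := by
    calc ‖w‖ ≤ ‖q‖ + ‖g‖ := norm_sub_le _ _
    _ ≤ 2 * R := by linarith
  have hwnn : 0 ≤ ‖w‖ := norm_nonneg _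
  have : Cb / 2 * ‖w‖ ^ 2 ≤ (Cb * R + 1) * ‖w‖ := by
    nlinarith [mul_le_mul_of_nonneg_left hwle (mul_nonneg hCb.le hwnn)]
  linarith
end
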